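/- Let A ∈ {0,1}^{N×n} with A_{j i₁} = A_{j i₂} = 1 for some row j and columns i₁ ≠ i₂, and let {U_j}, {V_i} be unit vectors with ⟨U_j, V_{i₁}⟩ ≠ ⟨U_j, V_{i₂}⟩. Define the InfoNCE loss L(T) = −Σ_{(j,i): A_{ji}=1} log(exp(T⟨U_j,V_i⟩) / Σ_ℓ exp(T⟨U_j,V_ℓ⟩)). Then L(T) → +∞ as T → ∞; in fact L(T) ≥ log(1 + exp(T·|⟨U_j,V_{i₁}⟩ − ⟨U_j,V_{i₂}⟩|)). -/
import Mathlib

open RealInnerProductSpace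

set_option maxHeartbeats 1000000

private lemma aux_two (x y S : ℝ) (hS : Real.exp x + Real.exp y ≤ S) :
    Real.log (1 + Real.exp |x - y|) ≤ (Real.log S - x) + (Real.log S - y) := by
  wlog h : y ≤ x with H
  · have := H y x S (by linarith) (le_of_not_ge h)
    rw [abs_sub_comm] at this
    linarith
  have hx : Real.exp x ≤ S := by
    have := (Real.exp_pos y).le; linarith
  have hSpos : 0 < S := lt_of_lt_of_le (Real.exp_pos x) hx
  have h1 : Real.log S - y ≥ Real.log (1 + Real.exp (x - y)) := by
    have heq : Real.exp x + Real.exp y = Real.exp y * (1 + Real.exp (x - y)) := by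
      rw [mul_add, mul_one, ← Real.exp_add]; ring_nf
    have hlog : Real.log (Real.exp x + Real.exp y) ≤ Real.log S :=
      Real.log_le_log (by positivity) hS
    rw [heq, Real.log_mul (Real.exp_ne_zero y) (by positivity), Real.log_exp] at hlog
    linarith
  have h2 : 0 ≤ Real.log S - x := by
    have := Real.log_le_log (Real.exp_pos x) hx
    rw [Real.log_exp] at this; linarith
  rw [abs_of_nonneg (by linarith : (0:ℝ) ≤ x - y)]
  linarith

theorem stmt19 {N n d : ℕ} (A : Fin N → Fin n → Bool)
    (U : Fin N → EuclideanSpace ℝ (Fin d)) (V : Fin n → EuclideanSpace ℝ (Fin d))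
    (hU : ∀ j, ‖U j‖ = 1) (hV : ∀ i, ‖V i‖ = 1)
    (j : Fin N) (i₁ i₂ : Fin n) (hi : i₁ ≠ i₂)
    (hA₁ : A j i₁ = true) (hA₂ : A j i₂ = true)
    (hdiff : ⟪U j, V i₁⟫ ≠ ⟪U j, V i₂⟫) :
    (∀ T : ℝ, 0 < T →
      Real.log (1 + Real.exp (T * |⟪U j, V i₁⟫ - ⟪U j, V i₂⟫|)) ≤
        -∑ j' : Fin N, ∑ i' : Fin n,
          if A j' i' then
            Real.log (Real.exp (T * ⟪U j', V i'⟫) / ∑ ℓ, Real.exp (T * ⟪U j', V ℓ⟫))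
          else 0) ∧
    Filter.Tendsto
      (fun T : ℝ =>
        -∑ j' : Fin N, ∑ i' : Fin n,
          if A j' i' then
            Real.log (Real.exp (T * ⟪U j', V i'⟫) / ∑ ℓ, Real.exp (T * ⟪U j', V ℓ⟫))
          else 0)
      Filter.atTop Filter.atTop := by
  set a := ⟪U j, V i₁⟫ with ha
  set b := ⟪U j, V i₂⟫ with hb
  have hc : 0 < |a - b| := abs_pos.mpr (sub_ne_zero.mpr hdiff)
  -- the key lower bound
  have key : ∀ T : ℝ, 0 < T →
      Real.log (1 + Real.exp (T * |a - b|)) ≤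
        -∑ j' : Fin N, ∑ i' : Fin n,
          if A j' i' then
            Real.log (Real.exp (T * ⟪U j', V i'⟫) / ∑ ℓ, Real.exp (T * ⟪U j', V ℓ⟫))
          else 0 := by
    intro T hT
    set t : Fin N → Fin n → ℝ := fun j' i' =>
      if A j' i' then
        Real.log (Real.exp (T * ⟪U j', V i'⟫) / ∑ ℓ, Real.exp (T * ⟪U j', V ℓ⟫))
      else 0 with ht
    have hSpos : ∀ j' : Fin N, 0 < ∑ ℓ, Real.exp (T * ⟪U j', V ℓ⟫) := fun j' =>
      Finset.sum_pos (fun ℓ _ => Real.exp_pos _) ⟨i₁, Finset.mem_univ i₁⟩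
    have hterm : ∀ j' i', t j' i' ≤ 0 := by
      intro j' i'
      simp only [ht]
      split
      · apply Real.log_nonpos
        · exact div_nonneg (Real.exp_pos _).le (hSpos j').le
        · rw [div_le_one (hSpos j')]
          exact Finset.single_le_sum (f := fun ℓ => Real.exp (T * ⟪U j', V ℓ⟫))
            (fun ℓ _ => (Real.exp_pos _).le) (Finset.mem_univ i')
      · exact le_rfl
    have hneg : -∑ j' : Fin N, ∑ i' : Fin n, t j' i'
        = ∑ j' : Fin N, ∑ i' : Fin n, (-t j' i') := by
      simp [Finset.sum_neg_distrib]
    rw [hneg]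
    have step1 : ∑ i' : Fin n, (-t j i') ≤ ∑ j' : Fin N, ∑ i' : Fin n, (-t j' i') :=
      Finset.single_le_sum
        (f := fun j' => ∑ i' : Fin n, (-t j' i'))
        (fun j' _ => Finset.sum_nonneg fun i' _ => neg_nonneg.mpr (hterm j' i'))
        (Finset.mem_univ j)
    have step2 : (-t j i₁) + (-t j i₂) ≤ ∑ i' : Fin n, (-t j i') := by
      rw [← Finset.sum_pair (f := fun i' => -t j i') hi]
      exact Finset.sum_le_sum_of_subset_of_nonneg (Finset.subset_univ _)
        (fun i' _ _ => neg_nonneg.mpr (hterm j i'))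
    have hS : Real.exp (T * a) + Real.exp (T * b) ≤ ∑ ℓ, Real.exp (T * ⟪U j, V ℓ⟫) := by
      have : Real.exp (T * a) + Real.exp (T * b)
          = ∑ i' ∈ ({i₁, i₂} : Finset (Fin n)), Real.exp (T * ⟪U j, V i'⟫) := by
        rw [Finset.sum_pair hi]
      rw [this]
      exact Finset.sum_le_sum_of_subset_of_nonneg (Finset.subset_univ _)
        (fun i' _ _ => (Real.exp_pos _).le)
    have habs : T * |a - b| = |T * a - T * b| := by
      rw [← mul_sub, abs_mul, abs_of_pos hT]
    have ht1 : -t j i₁ = Real.log (∑ ℓ, Real.exp (T * ⟪U j, V ℓ⟫)) - T * a := by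
      simp only [ht, hA₁, if_true, Real.log_div (Real.exp_ne_zero _) (hSpos j).ne',
        Real.log_exp]
      ring
    have ht2 : -t j i₂ = Real.log (∑ ℓ, Real.exp (T * ⟪U j, V ℓ⟫)) - T * b := by
      simp only [ht, hA₂, if_true, Real.log_div (Real.exp_ne_zero _) (hSpos j).ne',
        Real.log_exp]
      ring
    have := aux_two (T * a) (T * b) _ hS
    rw [habs]
    calc Real.log (1 + Real.exp |T * a - T * b|)
        ≤ (-t j i₁) + (-t j i₂) := by rw [ht1, ht2]; exact this
      _ ≤ _ := le_trans step2 step1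
  refine ⟨key, ?_⟩
  apply Filter.tendsto_atTop_mono' _ _
    ((Filter.tendsto_id.atTop_mul_const hc))
  filter_upwards [Filter.eventually_gt_atTop 0] with T hT
  calc (id T) * |a - b| = Real.log (Real.exp (T * |a - b|)) := by
        rw [Real.log_exp]; rfl
    _ ≤ Real.log (1 + Real.exp (T * |a - b|)) :=
        Real.log_le_log (Real.exp_pos _) (by linarith)
    _ ≤ _ := key T hT
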